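/- Let i_max < j_max be positive integers, let a_{ij} > 0 and b_{ij} > 0 for all i ∈ {1,…,i_max}, j ∈ {1,…,j_max}, and let c₁ > 0, c₂ > 0. Define f(w) = min_{1≤i≤i_max} (Σ_{j=1}^{j_max} w_j a_{ij} + c₁)/(Σ_{j=1}^{j_max} w_j b_{ij} + c₂) for w in the probability simplex Δ_{j_max}. Then there exists w* ∈ Δ_{j_max} attaining the maximum of f over Δ_{j_max} such that at most i_max of the coordinates w*_j are nonzero (equivalently, w* has at least j_max − i_max zero coordinates). -/

import Mathlib

lemma aux_mulVec_nonneg {m : ℕ} (hm : 0 < m) (M : Matrix (Fin m) (Fin m) ℝ) :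
    ∃ u : Fin m → ℝ, u ≠ 0 ∧ ∀ i, 0 ≤ M.mulVec u i := by
  by_cases h : M.det = 0
  · obtain ⟨u, hu, huv⟩ := (Matrix.exists_mulVec_eq_zero_iff).2 h
    exact ⟨u, hu, fun i => by rw [huv]; exact le_refl 0⟩
  · have hU : IsUnit M.det := isUnit_iff_ne_zero.2 h
    have h1 : M.mulVec (M⁻¹.mulVec 1) = 1 := by
      rw [Matrix.mulVec_mulVec, Matrix.mul_nonsing_inv _ hU, Matrix.one_mulVec]
    refine ⟨M⁻¹.mulVec 1, ?_, fun i => by rw [h1]; exact zero_le_one⟩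
    intro h0
    rw [h0, Matrix.mulVec_zero] at h1
    have := congrFun h1 ⟨0, hm⟩
    simp at this

theorem stmt0 (imax jmax : ℕ) (h0 : 0 < imax) (hij : imax < jmax)
    (a b : Fin imax → Fin jmax → ℝ)
    (ha : ∀ i j, 0 < a i j) (hb : ∀ i j, 0 < b i j)
    (c1 c2 : ℝ) (hc1 : 0 < c1) (hc2 : 0 < c2) :
    ∃ w : Fin jmax → ℝ, (∀ j, 0 ≤ w j) ∧ (∑ j, w j = 1) ∧
      (Finset.univ.filter fun j => w j ≠ 0).card ≤ imax ∧
      ∀ v : Fin jmax → ℝ, (∀ j, 0 ≤ v j) → (∑ j, v j = 1) →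
        (⨅ i : Fin imax, (∑ j, v j * a i j + c1) / (∑ j, v j * b i j + c2)) ≤
          ⨅ i : Fin imax, (∑ j, w j * a i j + c1) / (∑ j, w j * b i j + c2) := by
  classical
  haveI hne : Nonempty (Fin imax) := ⟨⟨0, h0⟩⟩
  have hn : 0 < jmax := h0.trans hij
  set N : Fin imax → (Fin jmax → ℝ) → ℝ := fun i v => ∑ j, v j * a i j + c1 with hN
  set D : Fin imax → (Fin jmax → ℝ) → ℝ := fun i v => ∑ j, v j * b i j + c2 with hD
  set f : (Fin jmax → ℝ) → ℝ := fun v => ⨅ i, N i v / D i v with hf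
  have hDpos : ∀ v : Fin jmax → ℝ, (∀ j, 0 ≤ v j) → ∀ i, 0 < D i v := by
    intro v hv i
    have : (0:ℝ) ≤ ∑ j, v j * b i j :=
      Finset.sum_nonneg fun j _ => mul_nonneg (hv j) (hb i j).le
    simp only [hD]; linarith
  -- f v ≤ each ratio; each ratio ≥ t → f v ≥ t
  have hbdd : ∀ v : Fin jmax → ℝ, BddBelow (Set.range fun i => N i v / D i v) :=
    fun v => (Set.finite_range _).bddBelow
  have hf_le : ∀ (v : Fin jmax → ℝ) (i : Fin imax), f v ≤ N i v / D i v :=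
    fun v i => ciInf_le (hbdd v) i
  have hle_f : ∀ (v : Fin jmax → ℝ) (t : ℝ), (∀ i, t ≤ N i v / D i v) → t ≤ f v :=
    fun v t h => le_ciInf h
  -- continuity on the simplex
  have hcont : ContinuousOn f (stdSimplex ℝ (Fin jmax)) := by
    have heq : ∀ v, f v = Finset.univ.inf' Finset.univ_nonempty (fun i => N i v / D i v) :=
      fun v => (Finset.inf'_univ_eq_ciInf _).symm
    refine ContinuousOn.congr (ContinuousOn.finset_inf'_apply Finset.univ_nonempty ?_)
      (fun v hv => heq v)
    intro i _
    have hnum : Continuous fun v : Fin jmax → ℝ => N i v := by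
      apply Continuous.add _ continuous_const
      exact continuous_finset_sum _ fun j _ => (continuous_apply j).mul continuous_const
    have hden : Continuous fun v : Fin jmax → ℝ => D i v := by
      apply Continuous.add _ continuous_const
      exact continuous_finset_sum _ fun j _ => (continuous_apply j).mul continuous_const
    exact hnum.continuousOn.div hden.continuousOn
      (fun v hv => (hDpos v (fun j => hv.1 j) i).ne')
  -- the simplex is nonempty
  have hSne : (stdSimplex ℝ (Fin jmax)).Nonempty := by
    refine ⟨fun j => if j = ⟨0, hn⟩ then 1 else 0, fun j => ?_, ?_⟩
    · dsimp only; split <;> norm_num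
    · simp [Finset.sum_ite_eq']
  -- maximizer
  obtain ⟨w0, hw0S, hw0max⟩ :=
    (isCompact_stdSimplex ℝ (Fin jmax)).exists_isMaxOn hSne hcont
  set t : ℝ := f w0 with ht
  -- feasible set P
  set P : Set (Fin jmax → ℝ) :=
    {w | w ∈ stdSimplex ℝ (Fin jmax) ∧ ∀ i, t * D i w ≤ N i w} with hP
  have hw0P : w0 ∈ P := by
    refine ⟨hw0S, fun i => ?_⟩
    have h1 : t ≤ N i w0 / D i w0 := hf_le w0 i
    have h2 : 0 < D i w0 := hDpos w0 (fun j => hw0S.1 j) i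
    calc t * D i w0 ≤ (N i w0 / D i w0) * D i w0 := by
          exact mul_le_mul_of_nonneg_right h1 h2.le
      _ = N i w0 := div_mul_cancel₀ _ h2.ne'
  -- choose member of P with minimal support
  have hex : ∃ k, ∃ w ∈ P, (Finset.univ.filter fun j => w j ≠ 0).card = k :=
    ⟨_, w0, hw0P, rfl⟩
  set k0 := Nat.find hex with hk0
  obtain ⟨w, hwP, hwcard⟩ := Nat.find_spec hex
  have hmin : ∀ w' ∈ P, k0 ≤ (Finset.univ.filter fun j => w' j ≠ 0).card := by
    intro w' hw'
    by_contra hlt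
    exact Nat.find_min hex (lt_of_not_ge hlt) ⟨w', hw', rfl⟩
  -- main claim: k0 ≤ imax
  have hcard : (Finset.univ.filter fun j => w j ≠ 0).card ≤ imax := by
    rw [hwcard]
    by_contra hgt
    push_neg at hgt
    set Supp := Finset.univ.filter fun j : Fin jmax => w j ≠ 0 with hSupp
    obtain ⟨T, hTsub, hTcard⟩ := Finset.exists_subset_card_eq (show imax + 1 ≤ Supp.card by omega)
    set τ : Fin (imax+1) → Fin jmax := fun k => (T.orderIsoOfFin hTcard k : Fin jmax) with hτ
    have hτinj : Function.Injective τ := fun x y hxy =>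
      (T.orderIsoOfFin hTcard).injective (Subtype.ext hxy)
    have hτT : ∀ k, τ k ∈ T := fun k => (T.orderIsoOfFin hTcard k).2
    set g : Fin imax → Fin jmax → ℝ := fun i j => a i j - t * b i j with hg
    set M : Matrix (Fin imax) (Fin imax) ℝ :=
      fun i k => g i (τ k.castSucc) - g i (τ (Fin.last imax)) with hM
    obtain ⟨u, hu, hMu⟩ := aux_mulVec_nonneg h0 M
    set d : Fin jmax → ℝ := fun j =>
      (∑ k : Fin imax, if τ k.castSucc = j then u k else 0)
        - (if τ (Fin.last imax) = j then ∑ k, u k else 0) with hd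
    have hdsum : ∑ j, d j = 0 := by
      simp only [hd, Finset.sum_sub_distrib]
      rw [Finset.sum_comm]
      simp [Finset.sum_ite_eq]
    have hdT : ∀ j, j ∉ T → d j = 0 := by
      intro j hj
      have h1 : ∀ k : Fin imax, ¬ (τ k.castSucc = j) := fun k hk => hj (hk ▸ hτT _)
      have h2 : ¬ (τ (Fin.last imax) = j) := fun hk => hj (hk ▸ hτT _)
      simp [hd, h1, h2]
    have hdval : ∀ k : Fin imax, d (τ k.castSucc) = u k := by
      intro k
      have h2 : ¬ (τ (Fin.last imax) = τ k.castSucc) := fun h =>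
        (Fin.castSucc_lt_last k).ne' (hτinj h)
      have h3 : ∀ k' : Fin imax, (τ k'.castSucc = τ k.castSucc) ↔ k' = k := fun k' =>
        ⟨fun h => Fin.castSucc_injective _ (hτinj h), fun h => by rw [h]⟩
      simp only [hd, h3, h2, if_false, sub_zero]
      simp
    have hdkey : ∀ i, ∑ j, d j * g i j = M.mulVec u i := by
      intro i
      have hterm : ∀ j, d j * g i j =
          (∑ k : Fin imax, if τ k.castSucc = j then u k * g i j else 0)
            - (if τ (Fin.last imax) = j then (∑ k, u k) * g i j else 0) := by
        intro j
        simp only [hd]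
        rw [sub_mul, Finset.sum_mul]
        congr 1
        · exact Finset.sum_congr rfl fun k _ => by split <;> simp
        · split <;> simp
      rw [Finset.sum_congr rfl fun j _ => hterm j, Finset.sum_sub_distrib, Finset.sum_comm]
      simp only [Finset.sum_ite_eq, Finset.mem_univ, if_true]
      rw [Matrix.mulVec, dotProduct]
      simp only [hM, sub_mul, Finset.sum_sub_distrib, Finset.sum_mul]
      congr 1
      · exact Finset.sum_congr rfl fun k _ => mul_comm _ _
      · simp [Finset.mul_sum, mul_comm]
    obtain ⟨kk, hkk⟩ : ∃ k, u k ≠ 0 := Function.ne_iff.mp hu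
    have hdne : d (τ kk.castSucc) ≠ 0 := by rw [hdval]; exact hkk
    have hneg : ∃ j, d j < 0 := by
      by_contra hno
      push_neg at hno
      have := (Finset.sum_eq_zero_iff_of_nonneg (fun j _ => hno j)).mp hdsum
      exact hdne (this _ (Finset.mem_univ _))
    set J := Finset.univ.filter fun j => d j < 0 with hJ
    have hJne : J.Nonempty := ⟨hneg.choose, by simp [hJ, hneg.choose_spec]⟩
    set ε := J.inf' hJne (fun j => w j / (-d j)) with hε
    have hwposT : ∀ j ∈ T, 0 < w j := by
      intro j hj
      have hmem := hTsub hj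
      simp only [hSupp, Finset.mem_filter, Finset.mem_univ, true_and] at hmem
      exact lt_of_le_of_ne (hwP.1.1 j) (Ne.symm hmem)
    have hJT : ∀ j ∈ J, j ∈ T := by
      intro j hj
      by_contra hjT
      have h1 := hdT j hjT
      simp only [hJ, Finset.mem_filter, Finset.mem_univ, true_and] at hj
      linarith
    have hεpos : 0 < ε := by
      rw [hε, Finset.lt_inf'_iff]
      intro j hj
      have hdj : d j < 0 := by
        simpa only [hJ, Finset.mem_filter, Finset.mem_univ, true_and] using hj
      exact div_pos (hwposT j (hJT j hj)) (by linarith)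
    set w' : Fin jmax → ℝ := fun j => w j + ε * d j with hw'
    have hw'nonneg : ∀ j, 0 ≤ w' j := by
      intro j
      rcases le_or_gt 0 (d j) with h | h
      · have h1 := hwP.1.1 j
        have h2 := mul_nonneg hεpos.le h
        simp only [hw']; linarith
      · have hjJ : j ∈ J := by
          simp only [hJ, Finset.mem_filter, Finset.mem_univ, true_and]; exact h
        have h1 : ε ≤ w j / (-d j) := Finset.inf'_le _ hjJ
        have h2 : (0:ℝ) < -d j := by linarith
        rw [le_div_iff₀ h2] at h1
        simp only [hw']; nlinarith
    have hw'sum : ∑ j, w' j = 1 := by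
      simp only [hw']
      rw [Finset.sum_add_distrib, ← Finset.mul_sum, hdsum, mul_zero, add_zero]
      exact hwP.1.2
    have hw'P : w' ∈ P := by
      refine ⟨⟨hw'nonneg, hw'sum⟩, fun i => ?_⟩
      have hNi : N i w' = N i w + ε * ∑ j, d j * a i j := by
        simp only [hN, hw', add_mul, Finset.sum_add_distrib, Finset.mul_sum, mul_assoc]
        ring
      have hDi : D i w' = D i w + ε * ∑ j, d j * b i j := by
        simp only [hD, hw', add_mul, Finset.sum_add_distrib, Finset.mul_sum, mul_assoc]
        ring
      have expand : ∑ j, d j * a i j - t * ∑ j, d j * b i j = M.mulVec u i := by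
        rw [← hdkey i, Finset.mul_sum, ← Finset.sum_sub_distrib]
        exact Finset.sum_congr rfl fun j _ => by simp only [hg]; ring
      have hq : 0 ≤ ε * ((∑ j, d j * a i j) - t * ∑ j, d j * b i j) :=
        mul_nonneg hεpos.le (by rw [expand]; exact hMu i)
      have hconstr := hwP.2 i
      rw [hNi, hDi]
      nlinarith [hq, hconstr]
    obtain ⟨j0, hj0J, hj0⟩ := Finset.exists_mem_eq_inf' hJne (fun j => w j / (-d j))
    have hdj0 : d j0 < 0 := by
      simpa only [hJ, Finset.mem_filter, Finset.mem_univ, true_and] using hj0J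
    have hw'j0 : w' j0 = 0 := by
      have hd0 : -d j0 ≠ 0 := by linarith
      have hεval : ε = w j0 / (-d j0) := hj0
      simp only [hw']
      rw [hεval]
      field_simp
      rw [div_self hdj0.ne]; ring
    have hsub : (Finset.univ.filter fun j => w' j ≠ 0) ⊆ Supp := by
      intro j hj
      rw [Finset.mem_filter] at hj
      rw [hSupp, Finset.mem_filter]
      refine ⟨Finset.mem_univ _, fun hwj => ?_⟩
      have hjT : j ∉ T := fun hT => (hwposT j hT).ne' hwj
      have hdj := hdT j hjT
      exact hj.2 (by simp only [hw']; rw [hwj, hdj]; ring)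
    have hj0Supp : j0 ∈ Supp := hTsub (hJT j0 hj0J)
    have hj0not : j0 ∉ (Finset.univ.filter fun j => w' j ≠ 0) := by
      simp [hw'j0]
    have hlt := Finset.card_lt_card ((Finset.ssubset_iff_of_subset hsub).2 ⟨j0, hj0Supp, hj0not⟩)
    have hge := hmin w' hw'P
    omega
  refine ⟨w, fun j => hwP.1.1 j, hwP.1.2, hcard, ?_⟩
  intro v hv1 hv2
  have h1 : f v ≤ t := hw0max ⟨hv1, hv2⟩
  have h2 : t ≤ f w := by
    apply hle_f
    intro i
    have hD2 : 0 < D i w := hDpos w (fun j => hwP.1.1 j) i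
    rw [le_div_iff₀ hD2]
    exact hwP.2 i
  exact le_trans h1 h2
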